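/- Evolution equation for the tail density: Let (c_i(t))_{i≥1} be a solution to the Becker-Döring equations with non-negative initial datum of finite density, and assume the coefficient hypotheses (H1) and (H2). Then for each j ≥ 2 the tail density G_j(t) = ∑_{i≥j} c_i(t) is a continuously differentiable function of t and satisfies (d/dt) G_j(t) = a_{j−1} c_1(t) (G_{j−1}(t) − G_j(t)) + b_j (G_{j+1}(t) − G_j(t)) for all t ≥ 0. -/

import Mathlib

/-!
STATEMENT 4: Evolution equation for the tail density.

Sequences are indexed by `ℕ`; the physically relevant entries are those of
index `i ≥ 1` (index `0` is unused).
-/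

open Filter Set
open scoped Topology

/-- Hypothesis (H1): either `0 < a_i ≤ ā i^γ` for all `i ≥ 1`, some `ā > 0`
and some `0 ≤ γ < 1`, or `C₁ i ≤ a_i ≤ C₂ i` for all `i ≥ 1` and some
`0 < C₁ ≤ C₂`. -/
def BDH1 (a : ℕ → ℝ) (γ : ℝ) : Prop :=
  (0 ≤ γ ∧ γ < 1 ∧ ∃ abar : ℝ, 0 < abar ∧
      ∀ i : ℕ, 1 ≤ i → a i ≤ abar * (i : ℝ) ^ γ) ∨
  (γ = 1 ∧ ∃ C₁ C₂ : ℝ, 0 < C₁ ∧ C₁ ≤ C₂ ∧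
      ∀ i : ℕ, 1 ≤ i → C₁ * (i : ℝ) ≤ a i ∧ a i ≤ C₂ * (i : ℝ))

/-- A solution of the Becker–Döring equations on `[0,∞)` with coagulation
coefficients `a` and fragmentation coefficients `b`: a family of
non-negative continuously differentiable functions `c i : [0,∞) → ℝ`
(`i ≥ 1`) with finite density `∑_{i ≥ 1} i c_i(t) < ∞`, satisfying
`(d/dt) c_i = W_{i-1} - W_i` for `i ≥ 2` and
`(d/dt) c_1 = -W_1 - ∑_{k ≥ 1} W_k`, where
`W_i(t) = a_i c_1(t) c_i(t) - b_{i+1} c_{i+1}(t)`. -/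
structure IsBDSolution (a b : ℕ → ℝ) (c : ℕ → ℝ → ℝ) : Prop where
  nonneg : ∀ i : ℕ, 1 ≤ i → ∀ t : ℝ, 0 ≤ t → 0 ≤ c i t
  densSummable : ∀ t : ℝ, 0 ≤ t →
    Summable fun i : ℕ => ((i : ℝ) + 1) * c (i + 1) t
  Wsummable : ∀ t : ℝ, 0 ≤ t → Summable fun k : ℕ =>
    a (k + 1) * c 1 t * c (k + 1) t - b (k + 2) * c (k + 2) t
  ode : ∀ i : ℕ, 2 ≤ i → ∀ t : ℝ, 0 ≤ t →
    HasDerivWithinAt (c i)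
      ((a (i - 1) * c 1 t * c (i - 1) t - b i * c i t)
        - (a i * c 1 t * c i t - b (i + 1) * c (i + 1) t)) (Set.Ici 0) t
  ode1 : ∀ t : ℝ, 0 ≤ t →
    HasDerivWithinAt (c 1)
      (-(a 1 * c 1 t * c 1 t - b 2 * c 2 t)
        - ∑' k : ℕ, (a (k + 1) * c 1 t * c (k + 1) t - b (k + 2) * c (k + 2) t))
      (Set.Ici 0) t

/-- The tail density `G_j(t) = ∑_{i ≥ j} c_i(t)`. -/
noncomputable def tailDensity (c : ℕ → ℝ → ℝ) (j : ℕ) (t : ℝ) : ℝ :=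
  ∑' i : ℕ, c (j + i) t


open MeasureTheory intervalIntegral
set_option maxHeartbeats 1000000


namespace BDtail

/-- Kronecker-type lemma for nonnegative summable sequences. -/
lemma kron {u : ℕ → ℝ} (hu : ∀ k, 0 ≤ u k) (hs : Summable u) {ε : ℝ} (hε : 0 < ε) :
    ∃ M₀ : ℕ, ∀ M, M₀ ≤ M → ∑ k ∈ Finset.range M, ((k : ℝ) + 1) * u k ≤ ε * M := by
  obtain ⟨N, hN⟩ : ∃ N, ∑' i, u (i + N) ≤ ε / 2 := by
    have h0 : Tendsto (fun N => ∑' i, u (i + N)) atTop (𝓝 0) := by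
      have h1 : Tendsto (fun N => ∑' (i : ℕ), u i - ∑ i ∈ Finset.range N, u i) atTop (𝓝 0) := by
        have := hs.hasSum.tendsto_sum_nat
        have h2 := this.const_sub (∑' i, u i)
        simpa using h2
      refine h1.congr fun N => ?_
      have := Summable.sum_add_tsum_nat_add (f := u) N hs
      linarith
    exact ((h0.eventually (ge_mem_nhds (half_pos hε))).exists).imp fun N h => h
  set A : ℝ := ∑ k ∈ Finset.range N, ((k : ℝ) + 1) * u k with hA
  refine ⟨N + ⌈A / (ε / 2)⌉₊ + 1, fun M hM => ?_⟩
  have hNM : N ≤ M := by omega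
  have hM1 : 1 ≤ M := by omega
  have hsplit : ∑ k ∈ Finset.range M, ((k : ℝ) + 1) * u k
      = A + ∑ k ∈ Finset.Ico N M, ((k : ℝ) + 1) * u k := by
    rw [hA, Finset.range_eq_Ico, Finset.range_eq_Ico]
    exact (Finset.sum_Ico_consecutive _ (Nat.zero_le N) hNM).symm
  rw [hsplit]
  have htail : ∑ k ∈ Finset.Ico N M, ((k : ℝ) + 1) * u k ≤ (M : ℝ) * (ε / 2) := by
    have h1 : ∑ k ∈ Finset.Ico N M, ((k : ℝ) + 1) * u k
        ≤ ∑ k ∈ Finset.Ico N M, (M : ℝ) * u k := by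
      refine Finset.sum_le_sum fun k hk => ?_
      have hkM : k < M := (Finset.mem_Ico.1 hk).2
      have : (k : ℝ) + 1 ≤ (M : ℝ) := by exact_mod_cast Nat.succ_le_of_lt hkM
      exact mul_le_mul_of_nonneg_right this (hu k)
    rw [← Finset.mul_sum] at h1
    refine le_trans h1 (mul_le_mul_of_nonneg_left ?_ (by positivity))
    rw [Finset.sum_Ico_eq_sum_range]
    have hsum' : Summable fun i => u (N + i) :=
      ((summable_nat_add_iff N).2 hs).congr fun i => by rw [Nat.add_comm]
    refine le_trans (Summable.sum_le_tsum _ (fun i _ => hu _) hsum') ?_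
    refine le_trans (le_of_eq (tsum_congr fun i => by rw [Nat.add_comm])) hN
  have hA' : A ≤ (ε / 2) * M := by
    have h3 : A / (ε / 2) ≤ (M : ℝ) := by
      refine le_trans (Nat.le_ceil _) ?_
      exact_mod_cast Nat.le_of_lt (by omega)
    calc A = A / (ε / 2) * (ε / 2) := by field_simp
    _ ≤ (M : ℝ) * (ε / 2) := mul_le_mul_of_nonneg_right h3 (by positivity)
    _ = (ε / 2) * M := by ring
  linarith

/-- double-sum counting bound. -/
lemma double_sum_le (g : ℕ → ℝ) (hg : ∀ k, 0 ≤ g k) (M N : ℕ) :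
    ∑ J ∈ Finset.range M, ∑ i ∈ Finset.range N, g (J + i)
      ≤ ∑ k ∈ Finset.range (M + N), ((k : ℝ) + 1) * g k := by
  have h1 : ∑ J ∈ Finset.range M, ∑ i ∈ Finset.range N, g (J + i)
      = ∑ p ∈ Finset.range M ×ˢ Finset.range N, g (p.1 + p.2) := by
    rw [Finset.sum_product]
  rw [h1, Finset.sum_comp (fun k => g k) (fun p : ℕ × ℕ => p.1 + p.2)]
  set s := Finset.range M ×ˢ Finset.range N with hsdef
  have himg : Finset.image (fun p : ℕ × ℕ => p.1 + p.2) s ⊆ Finset.range (M + N) := by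
    intro k hk
    simp only [Finset.mem_image] at hk
    obtain ⟨p, hp, rfl⟩ := hk
    simp only [hsdef, Finset.mem_product, Finset.mem_range] at hp ⊢
    omega
  refine le_trans (Finset.sum_le_sum ?_) (Finset.sum_le_sum_of_subset_of_nonneg himg ?_)
  · intro k _
    have hcard : (Finset.filter (fun p : ℕ × ℕ => p.1 + p.2 = k) s).card ≤ k + 1 := by
      have hc := Finset.card_le_card_of_injOn (fun p : ℕ × ℕ => p.1)
        (s := Finset.filter (fun p : ℕ × ℕ => p.1 + p.2 = k) s)
        (t := Finset.range (k + 1))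
        (fun p hp => by
          simp only [Finset.mem_coe, Finset.mem_filter] at hp
          simp only [Finset.mem_coe, Finset.mem_range]
          omega)
        (fun p hp q hq hpq => by
          simp only [Finset.coe_filter, Set.mem_setOf_eq] at hp hq
          have h1 : p.1 = q.1 := hpq
          have h2 := hp.2
          have h3 := hq.2
          exact Prod.ext h1 (by omega))
      simpa using hc
    calc (Finset.filter (fun p : ℕ × ℕ => p.1 + p.2 = k) s).card • g k
        = ((Finset.filter (fun p : ℕ × ℕ => p.1 + p.2 = k) s).card : ℝ) * g k :=
          nsmul_eq_mul _ _
      _ ≤ ((k : ℝ) + 1) * g k := by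
          refine mul_le_mul_of_nonneg_right ?_ (hg k)
          exact_mod_cast hcard
  · intro k _ _
    have := hg k
    positivity

/-- Bundled context for the proof. -/
structure Setup where
  a : ℕ → ℝ
  b : ℕ → ℝ
  c : ℕ → ℝ → ℝ
  Cm : ℝ
  bb : ℝ
  hCm0 : 0 ≤ Cm
  hbb0 : 0 ≤ bb
  ha_le : ∀ i : ℕ, 1 ≤ i → a i ≤ Cm * i
  ha0 : ∀ i : ℕ, 1 ≤ i → 0 ≤ a i
  hb_le : ∀ i : ℕ, 1 ≤ i → b i ≤ bb * a i
  hb0 : ∀ i : ℕ, 2 ≤ i → 0 ≤ b i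
  cnonneg : ∀ i : ℕ, 1 ≤ i → ∀ t : ℝ, 0 ≤ t → 0 ≤ c i t
  densSummable : ∀ t : ℝ, 0 ≤ t → Summable fun i : ℕ => ((i : ℝ) + 1) * c (i + 1) t
  ode : ∀ i : ℕ, 2 ≤ i → ∀ t : ℝ, 0 ≤ t →
    HasDerivWithinAt (c i)
      ((a (i - 1) * c 1 t * c (i - 1) t - b i * c i t)
        - (a i * c 1 t * c i t - b (i + 1) * c (i + 1) t)) (Set.Ici 0) t
  cont1 : ContinuousOn (c 1) (Set.Ici 0)

namespace Setup

variable (X : Setup)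

/-- extended (frozen at time `0` for negative times) concentration. -/
noncomputable def ce (k : ℕ) (τ : ℝ) : ℝ := X.c k (max τ 0)

/-- the flux `W_k` in un-extended form -/
noncomputable def Wr (k : ℕ) (τ : ℝ) : ℝ :=
  X.a k * X.c 1 τ * X.c k τ - X.b (k + 1) * X.c (k + 1) τ

/-- the flux `W_k`, extended. -/
noncomputable def We (k : ℕ) (τ : ℝ) : ℝ :=
  X.a k * X.ce 1 τ * X.ce k τ - X.b (k + 1) * X.ce (k + 1) τ

/-- extended tail density. -/
noncomputable def G (j : ℕ) (x : ℝ) : ℝ := ∑' i : ℕ, X.ce (j + i) x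

lemma ce_eq {k : ℕ} {τ : ℝ} (h : 0 ≤ τ) : X.ce k τ = X.c k τ := by
  simp [ce, max_eq_left h]

lemma We_eq {k : ℕ} {τ : ℝ} (h : 0 ≤ τ) : X.We k τ = X.Wr k τ := by
  simp [We, Wr, ce, max_eq_left h]

lemma contOn (i : ℕ) (hi : 1 ≤ i) : ContinuousOn (X.c i) (Set.Ici 0) := by
  rcases eq_or_lt_of_le hi with h | h
  · rw [← h]; exact X.cont1
  · exact fun t ht => ((X.ode i h t ht).continuousWithinAt)

lemma cont_ce (i : ℕ) (hi : 1 ≤ i) : Continuous (X.ce i) := by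
  exact (X.contOn i hi).comp_continuous (continuous_id.max continuous_const)
    (fun x => Set.mem_Ici.2 (le_max_right _ _))

lemma ce_nonneg (i : ℕ) (hi : 1 ≤ i) (τ : ℝ) : 0 ≤ X.ce i τ :=
  X.cnonneg i hi (max τ 0) (le_max_right _ _)

lemma cont_We (k : ℕ) (hk : 1 ≤ k) : Continuous (X.We k) := by
  refine (((continuous_const.mul (X.cont_ce 1 le_rfl)).mul (X.cont_ce k hk)).sub
    (continuous_const.mul (X.cont_ce (k+1) (by omega))))

/-- basic summability of the tails (any shift). -/
lemma summable_ce (j : ℕ) (hj : 1 ≤ j) (x : ℝ) : Summable fun i : ℕ => X.ce (j + i) x := by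
  have h0 : Summable fun i : ℕ => ((i : ℝ) + 1) * X.c (i + 1) (max x 0) :=
    X.densSummable _ (le_max_right _ _)
  have h1 : Summable fun i : ℕ => X.c (i + 1) (max x 0) := by
    refine Summable.of_nonneg_of_le (fun i => X.cnonneg _ (by omega) _ (le_max_right _ _))
      (fun i => ?_) h0
    have hnn := X.cnonneg (i+1) (by omega) (max x 0) (le_max_right _ _)
    nlinarith [Nat.cast_nonneg (α := ℝ) i]
  -- shift by j - 1
  obtain ⟨J, rfl⟩ : ∃ J, j = J + 1 := ⟨j - 1, by omega⟩
  have h2 : Summable fun i : ℕ => X.c (i + J + 1) (max x 0) := by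
    have := (summable_nat_add_iff (f := fun i : ℕ => X.c (i + 1) (max x 0)) J).2 h1
    exact this
  refine h2.congr fun i => ?_
  simp only [ce]
  congr 1
  omega

lemma summable_weight (x : ℝ) : Summable fun i : ℕ => ((i : ℝ) + 1) * X.ce (i + 1) x := by
  have h0 : Summable fun i : ℕ => ((i : ℝ) + 1) * X.c (i + 1) (max x 0) :=
    X.densSummable _ (le_max_right _ _)
  exact h0.congr fun i => by simp [ce]

lemma G_nonneg (j : ℕ) (hj : 1 ≤ j) (x : ℝ) : 0 ≤ X.G j x :=
  tsum_nonneg fun i => X.ce_nonneg _ (by omega) _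

lemma partial_le_G (j : ℕ) (hj : 1 ≤ j) (x : ℝ) (n : ℕ) :
    ∑ i ∈ Finset.range n, X.ce (j + i) x ≤ X.G j x :=
  Summable.sum_le_tsum _ (fun i _ => X.ce_nonneg _ (by omega) _) (X.summable_ce j hj x)

lemma partial_tendsto (j : ℕ) (hj : 1 ≤ j) (x : ℝ) :
    Tendsto (fun n => ∑ i ∈ Finset.range n, X.ce (j + i) x) atTop (𝓝 (X.G j x)) :=
  (X.summable_ce j hj x).hasSum.tendsto_sum_nat

-- === part2 ===


lemma ode2 (K : ℕ) {t : ℝ} (ht : 0 ≤ t) :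
    HasDerivWithinAt (X.c (K + 2)) (X.Wr (K + 1) t - X.Wr (K + 2) t) (Set.Ici 0) t := by
  have h := X.ode (K + 2) (by omega) t ht
  have e1 : K + 2 - 1 = K + 1 := rfl
  simpa [Wr, e1] using h

lemma intInt_We (k : ℕ) (hk : 1 ≤ k) (s s' : ℝ) :
    IntervalIntegrable (X.We k) volume s s' :=
  (X.cont_We k hk).intervalIntegrable s s'

/-- FTC identity for partial tail sums. -/
lemma ftc (J n : ℕ) {s s' : ℝ} (hs : 0 ≤ s) (hss : s ≤ s') :
    (∑ i ∈ Finset.range n, X.ce (J + 2 + i) s') - (∑ i ∈ Finset.range n, X.ce (J + 2 + i) s)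
      = (∫ τ in s..s', X.We (J + 1) τ) - ∫ τ in s..s', X.We (J + 1 + n) τ := by
  rcases Nat.eq_zero_or_pos n with rfl | hn
  · simp
  have key : ∫ τ in s..s', (X.We (J + 1) τ - X.We (J + 1 + n) τ)
      = (∑ i ∈ Finset.range n, X.c (J + 2 + i) s') - ∑ i ∈ Finset.range n, X.c (J + 2 + i) s := by
    apply integral_eq_sub_of_hasDeriv_right_of_le hss
    · refine continuousOn_finset_sum _ fun i _ => ?_
      exact (X.contOn (J + 2 + i) (by omega)).mono
          (fun y hy => le_trans hs hy.1 : Icc s s' ⊆ Ici 0)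
    · intro x hx
      have hx0 : (0:ℝ) ≤ x := le_trans hs (le_of_lt hx.1)
      have hsum : HasDerivWithinAt (fun τ => ∑ i ∈ Finset.range n, X.c (J + 2 + i) τ)
          (∑ i ∈ Finset.range n, (X.Wr (J + 1 + i) x - X.Wr (J + 2 + i) x)) (Set.Ici 0) x := by
        refine HasDerivWithinAt.fun_sum fun i _ => ?_
        have := X.ode2 (J + i) hx0
        have e : J + i + 2 = J + 2 + i := by omega
        have e2 : J + i + 1 = J + 1 + i := by omega
        rw [e, e2] at this
        exact this
      have htel : ∑ i ∈ Finset.range n, (X.Wr (J + 1 + i) x - X.Wr (J + 2 + i) x)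
          = X.Wr (J + 1) x - X.Wr (J + 1 + n) x := by
        have h2 : ∑ i ∈ Finset.range n, (X.Wr (J + 1 + i) x - X.Wr (J + 2 + i) x)
            = ∑ i ∈ Finset.range n,
                ((fun i => X.Wr (J + 1 + i) x) i - (fun i => X.Wr (J + 1 + i) x) (i + 1)) := by
          refine Finset.sum_congr rfl fun i _ => ?_
          have e : J + 2 + i = J + 1 + (i + 1) := by omega
          rw [e]
        rw [h2, Finset.sum_range_sub']
      rw [htel] at hsum
      have hval : X.We (J + 1) x - X.We (J + 1 + n) x
          = X.Wr (J + 1) x - X.Wr (J + 1 + n) x := by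
        rw [X.We_eq hx0, X.We_eq hx0]
      rw [hval]
      exact hsum.mono (fun y hy => le_trans hx0 (le_of_lt hy) : Ioi x ⊆ Ici 0)
    · exact ((X.cont_We (J+1) (by omega)).sub (X.cont_We (J+1+n) (by omega))).intervalIntegrable s s'
  have hsplit : ∫ τ in s..s', (X.We (J + 1) τ - X.We (J + 1 + n) τ)
      = (∫ τ in s..s', X.We (J + 1) τ) - ∫ τ in s..s', X.We (J + 1 + n) τ :=
    integral_sub (X.intInt_We _ (by omega) _ _) (X.intInt_We _ (by omega) _ _)
  rw [hsplit] at key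
  have e1 : ∑ i ∈ Finset.range n, X.ce (J + 2 + i) s' = ∑ i ∈ Finset.range n, X.c (J + 2 + i) s' :=
    Finset.sum_congr rfl fun i _ => X.ce_eq (le_trans hs hss)
  have e2 : ∑ i ∈ Finset.range n, X.ce (J + 2 + i) s = ∑ i ∈ Finset.range n, X.c (J + 2 + i) s :=
    Finset.sum_congr rfl fun i _ => X.ce_eq hs
  rw [e1, e2]
  linarith [key]

/-- limit of the boundary fluxes. -/
lemma omega_tendsto (J : ℕ) {s s' : ℝ} (hs : 0 ≤ s) (hss : s ≤ s') :
    Tendsto (fun n => ∫ τ in s..s', X.We (J + 1 + n) τ) atTop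
      (𝓝 ((∫ τ in s..s', X.We (J + 1) τ) - (X.G (J + 2) s' - X.G (J + 2) s))) := by
  have h1 : Tendsto
      (fun n => (∫ τ in s..s', X.We (J + 1) τ)
        - ((∑ i ∈ Finset.range n, X.ce (J + 2 + i) s') - ∑ i ∈ Finset.range n, X.ce (J + 2 + i) s))
      atTop (𝓝 ((∫ τ in s..s', X.We (J + 1) τ) - (X.G (J + 2) s' - X.G (J + 2) s))) := by
    exact tendsto_const_nhds.sub ((X.partial_tendsto (J+2) (by omega) s').sub
      (X.partial_tendsto (J+2) (by omega) s))
  refine h1.congr fun n => ?_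
  have := X.ftc J n hs hss
  linarith [this]

/-- the deficiency `ℓ` of the pair `(s,s')` (independent of the level). -/
noncomputable def ell (s s' : ℝ) : ℝ :=
  (∫ τ in s..s', X.We 1 τ) - (X.G 2 s' - X.G 2 s)

/-- All levels have the same limit: difference identity. -/
lemma limit_all (J : ℕ) {s s' : ℝ} (hs : 0 ≤ s) (hss : s ≤ s') :
    X.G (J + 2) s' - X.G (J + 2) s
      = (∫ τ in s..s', X.We (J + 1) τ) - X.ell s s' := by
  have h0 : Tendsto (fun n => ∫ τ in s..s', X.We (1 + n) τ) atTop (𝓝 (X.ell s s')) := by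
    have := X.omega_tendsto 0 hs hss
    simpa [ell] using this
  have hJ : Tendsto (fun n => ∫ τ in s..s', X.We (1 + n) τ) atTop
      (𝓝 ((∫ τ in s..s', X.We (J + 1) τ) - (X.G (J + 2) s' - X.G (J + 2) s))) := by
    have h2 := X.omega_tendsto J hs hss
    -- `fun n => ω (J+1+n)` is `(fun n => ω (1+n)) ∘ (· + J)` ; use tendsto_add_atTop_iff_nat
    have h3 : Tendsto (fun n => ∫ τ in s..s', X.We (1 + (n + J)) τ) atTop
        (𝓝 ((∫ τ in s..s', X.We (J + 1) τ) - (X.G (J + 2) s' - X.G (J + 2) s))) := by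
      refine (h2.congr fun n => ?_)
      rw [show J + 1 + n = 1 + (n + J) from by omega]
    exact (tendsto_add_atTop_iff_nat (f := fun n => ∫ τ in s..s', X.We (1 + n) τ) J).1 h3
  have := tendsto_nhds_unique h0 hJ
  linarith [this]

-- === part4 ===


noncomputable def PsiB (x : ℝ) : ℝ := ∑' k : ℕ, ((k : ℝ) + 1) * X.ce (k + 2) x

lemma summable_PsiB (x : ℝ) : Summable fun k : ℕ => ((k : ℝ) + 1) * X.ce (k + 2) x := by
  have h0 := X.summable_weight x
  have h1 : Summable fun k : ℕ => ((k : ℝ) + 2) * X.ce (k + 2) x := by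
    have h2 := (summable_nat_add_iff (f := fun i : ℕ => ((i : ℝ) + 1) * X.ce (i + 1) x) 1).2 h0
    refine h2.congr fun k => ?_
    push_cast
    ring_nf
  refine Summable.of_nonneg_of_le (fun k => ?_) (fun k => ?_) h1
  · have := X.ce_nonneg (k + 2) (by omega) x
    positivity
  · have h3 := X.ce_nonneg (k + 2) (by omega) x
    have h4 : ((k : ℝ) + 1) ≤ (k : ℝ) + 2 := by linarith
    exact mul_le_mul_of_nonneg_right h4 h3

lemma PsiB_nonneg (x : ℝ) : 0 ≤ X.PsiB x :=
  tsum_nonneg fun k => mul_nonneg (by positivity) (X.ce_nonneg (k + 2) (by omega) x)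

lemma sum_G_le (x : ℝ) (M : ℕ) :
    ∑ J ∈ Finset.range M, X.G (J + 2) x ≤ X.PsiB x := by
  have key : ∀ N, ∑ J ∈ Finset.range M, ∑ i ∈ Finset.range N, X.ce (J + 2 + i) x ≤ X.PsiB x := by
    intro N
    have h1 : ∑ J ∈ Finset.range M, ∑ i ∈ Finset.range N, X.ce (J + 2 + i) x
        = ∑ J ∈ Finset.range M, ∑ i ∈ Finset.range N, (fun k => X.ce (k + 2) x) (J + i) := by
      refine Finset.sum_congr rfl fun J _ => Finset.sum_congr rfl fun i _ => ?_
      simp only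
      rw [show J + 2 + i = J + i + 2 from by omega]
    rw [h1]
    refine le_trans (double_sum_le _ (fun k => X.ce_nonneg (k + 2) (by omega) x) M N) ?_
    exact Summable.sum_le_tsum _ (fun k _ => mul_nonneg (by positivity) (X.ce_nonneg (k + 2) (by omega) x))
      (X.summable_PsiB x)
  have hlim : Tendsto (fun N => ∑ J ∈ Finset.range M, ∑ i ∈ Finset.range N, X.ce (J + 2 + i) x)
      atTop (𝓝 (∑ J ∈ Finset.range M, X.G (J + 2) x)) :=
    tendsto_finset_sum _ fun J _ => X.partial_tendsto (J + 2) (by omega) x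
  exact le_of_tendsto' hlim key

/-- Core analytic lemma: if the tail density `G 2` is integrable on `(s,s')` then
the deficiency vanishes. -/
lemma ell_eq_zero {s s' : ℝ} (hs : 0 ≤ s) (hss : s ≤ s')
    (hInt : IntegrableOn (X.G 2) (Ioo s s') volume) : X.ell s s' = 0 := by
  set I : ℕ → ℝ := fun k => ∫ τ in s..s', X.ce k τ with hI
  have hInn : ∀ k, 1 ≤ k → 0 ≤ I k := fun k hk =>
    intervalIntegral.integral_nonneg hss fun u _ => X.ce_nonneg k hk u
  have hIint : ∀ k, 1 ≤ k → IntervalIntegrable (X.ce k) volume s s' := fun k hk =>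
    (X.cont_ce k hk).intervalIntegrable _ _
  obtain ⟨Mc0, hMc0⟩ := (isCompact_Icc (a := s) (b := s')).exists_bound_of_continuousOn
    ((X.cont_ce 1 le_rfl).continuousOn)
  set Mc : ℝ := max Mc0 0 with hMcdef
  have hMc : ∀ τ ∈ Icc s s', X.ce 1 τ ≤ Mc := fun τ hτ =>
    le_trans (le_abs_self _) (le_trans (hMc0 τ hτ) (le_max_left _ _))
  have hMcnn : 0 ≤ Mc := le_max_right _ _
  set C₁ : ℝ := X.Cm * Mc with hC₁
  set C₂ : ℝ := X.bb * X.Cm with hC₂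
  have hC₁0 : 0 ≤ C₁ := mul_nonneg X.hCm0 hMcnn
  have hC₂0 : 0 ≤ C₂ := mul_nonneg X.hbb0 X.hCm0
  -- flux bound
  have homega : ∀ k : ℕ, 1 ≤ k →
      |∫ τ in s..s', X.We k τ| ≤ C₁ * (((k : ℝ) + 1) * I k) + C₂ * (((k : ℝ) + 2) * I (k + 1)) := by
    intro k hk
    have h1 : |∫ τ in s..s', X.We k τ| ≤ ∫ τ in s..s', |X.We k τ| :=
      intervalIntegral.abs_integral_le_integral_abs hss
    have hgc : Continuous fun τ => C₁ * (((k : ℝ) + 1) * X.ce k τ)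
        + C₂ * (((k : ℝ) + 2) * X.ce (k + 1) τ) :=
      ((continuous_const.mul (continuous_const.mul (X.cont_ce k hk))).add
        (continuous_const.mul (continuous_const.mul (X.cont_ce (k + 1) (by omega)))))
    have h2 : ∫ τ in s..s', |X.We k τ|
        ≤ ∫ τ in s..s', (C₁ * (((k : ℝ) + 1) * X.ce k τ) + C₂ * (((k : ℝ) + 2) * X.ce (k + 1) τ)) := by
      refine intervalIntegral.integral_mono_on hss
        ((X.cont_We k hk).abs.intervalIntegrable _ _)
        (hgc.intervalIntegrable _ _) ?_
      intro τ hτ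
      have hck := X.ce_nonneg k hk τ
      have hck1 := X.ce_nonneg (k + 1) (by omega) τ
      have hc1 := X.ce_nonneg 1 le_rfl τ
      have hak := X.ha0 k hk
      have hbk := X.hb0 (k + 1) (by omega)
      have habs : |X.We k τ| ≤ X.a k * X.ce 1 τ * X.ce k τ + X.b (k + 1) * X.ce (k + 1) τ := by
        rw [We]
        refine le_trans (abs_sub _ _) ?_
        rw [abs_of_nonneg (by positivity), abs_of_nonneg (by positivity)]
      refine le_trans habs ?_
      have hterm1 : X.a k * X.ce 1 τ * X.ce k τ ≤ C₁ * (((k : ℝ) + 1) * X.ce k τ) := by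
        have hale := X.ha_le k hk
        have hc1le := hMc τ hτ
        have hkk : (k : ℝ) ≤ (k : ℝ) + 1 := by linarith
        have h5 : X.a k * X.ce 1 τ ≤ (X.Cm * k) * Mc := by
          exact mul_le_mul hale hc1le hc1 (mul_nonneg X.hCm0 (Nat.cast_nonneg k))
        have h6 : (X.Cm * k) * Mc ≤ C₁ * ((k : ℝ) + 1) := by
          rw [hC₁]
          nlinarith [X.hCm0]
        calc X.a k * X.ce 1 τ * X.ce k τ ≤ ((X.Cm * k) * Mc) * X.ce k τ :=
              mul_le_mul_of_nonneg_right h5 hck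
          _ ≤ (C₁ * ((k : ℝ) + 1)) * X.ce k τ := mul_le_mul_of_nonneg_right h6 hck
          _ = C₁ * (((k : ℝ) + 1) * X.ce k τ) := by ring
      have hterm2 : X.b (k + 1) * X.ce (k + 1) τ ≤ C₂ * (((k : ℝ) + 2) * X.ce (k + 1) τ) := by
        have hble := X.hb_le (k + 1) (by omega)
        have hale := X.ha_le (k + 1) (by omega)
        have h7 : X.b (k + 1) ≤ C₂ * ((k : ℝ) + 2) := by
          rw [hC₂]
          have : X.bb * X.a (k + 1) ≤ X.bb * (X.Cm * ((k : ℕ) + 1 : ℕ)) := by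
            refine mul_le_mul_of_nonneg_left ?_ X.hbb0
            exact_mod_cast hale
          refine le_trans hble (le_trans this ?_)
          push_cast
          nlinarith [X.hbb0, X.hCm0]
        calc X.b (k + 1) * X.ce (k + 1) τ ≤ (C₂ * ((k : ℝ) + 2)) * X.ce (k + 1) τ :=
              mul_le_mul_of_nonneg_right h7 hck1
          _ = C₂ * (((k : ℝ) + 2) * X.ce (k + 1) τ) := by ring
      linarith
    have h3 : ∫ τ in s..s', (C₁ * (((k : ℝ) + 1) * X.ce k τ) + C₂ * (((k : ℝ) + 2) * X.ce (k + 1) τ))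
        = C₁ * (((k : ℝ) + 1) * I k) + C₂ * (((k : ℝ) + 2) * I (k + 1)) := by
      rw [intervalIntegral.integral_add
        (((continuous_const.fun_mul (continuous_const.fun_mul (X.cont_ce k hk)))).intervalIntegrable _ _)
        (((continuous_const.fun_mul (continuous_const.fun_mul (X.cont_ce (k + 1) (by omega))))).intervalIntegrable _ _)]
      rw [intervalIntegral.integral_const_mul, intervalIntegral.integral_const_mul,
        intervalIntegral.integral_const_mul, intervalIntegral.integral_const_mul]
    linarith
  -- summability of I (k+1)
  have hIsum2 : Summable fun k : ℕ => I (k + 2) := by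
    refine summable_of_sum_range_le (c := ∫ τ in s..s', X.G 2 τ)
      (fun k => hInn _ (by omega)) (fun n => ?_)
    have hGint : IntervalIntegrable (X.G 2) volume s s' :=
      (intervalIntegrable_iff_integrableOn_Ioo_of_le hss).2 hInt
    have e : ∑ k ∈ Finset.range n, I (k + 2)
        = ∫ τ in s..s', (∑ k ∈ Finset.range n, X.ce (k + 2) τ) := by
      rw [intervalIntegral.integral_finset_sum (fun k _ => hIint (k + 2) (by omega))]
    rw [e]
    refine intervalIntegral.integral_mono_on hss
      ((continuous_finset_sum _ fun k _ => X.cont_ce (k + 2) (by omega)).intervalIntegrable _ _)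
      hGint ?_
    intro τ _
    have h8 := X.partial_le_G 2 (by omega) τ n
    refine le_trans (le_of_eq ?_) h8
    exact Finset.sum_congr rfl fun k _ => by rw [show k + 2 = 2 + k from by omega]
  have hIsum : Summable fun k : ℕ => I (k + 1) := by
    refine (summable_nat_add_iff (f := fun k : ℕ => I (k + 1)) 1).1 ?_
    exact hIsum2.congr fun k => rfl
  -- main estimate
  have key : ∀ ε : ℝ, 0 < ε → |X.ell s s'| ≤ ε := by
    intro ε hε
    set K : ℝ := X.PsiB s' + X.PsiB s with hK
    have hK0 : 0 ≤ K := add_nonneg (X.PsiB_nonneg s') (X.PsiB_nonneg s)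
    set ε' : ℝ := ε / (8 * (C₁ + C₂) + 8) with hε'
    have hε'0 : 0 < ε' := by
      rw [hε']
      positivity
    obtain ⟨M₀, hM₀⟩ := kron (u := fun k => I (k + 1)) (fun k => hInn _ (by omega)) hIsum hε'0
    set M : ℕ := max (M₀ + 1) (max 1 (⌈2 * K / ε⌉₊ + 1)) with hM
    have hM1 : 1 ≤ M := le_trans (le_max_left _ _) (le_max_right _ _)
    have hMM₀ : M₀ ≤ M + 1 := by omega
    have hMK : 2 * K / ε ≤ (M : ℝ) := by
      have h9 : (⌈2 * K / ε⌉₊ : ℝ) ≤ (M : ℝ) := by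
        have : ⌈2 * K / ε⌉₊ ≤ M := by omega
        exact_mod_cast this
      exact le_trans (Nat.le_ceil _) h9
    -- identity
    have hid : (M : ℝ) * X.ell s s'
        = (∑ J ∈ Finset.range M, ∫ τ in s..s', X.We (J + 1) τ)
          - ∑ J ∈ Finset.range M, (X.G (J + 2) s' - X.G (J + 2) s) := by
      have h10 : ∑ J ∈ Finset.range M, (X.G (J + 2) s' - X.G (J + 2) s)
          = ∑ J ∈ Finset.range M, ((∫ τ in s..s', X.We (J + 1) τ) - X.ell s s') := by
        exact Finset.sum_congr rfl fun J _ => X.limit_all J hs hss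
      rw [h10, Finset.sum_sub_distrib, Finset.sum_const, Finset.card_range]
      simp [nsmul_eq_mul]
    -- bound on |∑ ΔG|
    have hG1 : |∑ J ∈ Finset.range M, (X.G (J + 2) s' - X.G (J + 2) s)| ≤ K := by
      rw [Finset.sum_sub_distrib]
      refine le_trans (abs_sub _ _) ?_
      rw [abs_of_nonneg (Finset.sum_nonneg fun J _ => X.G_nonneg _ (by omega) _),
        abs_of_nonneg (Finset.sum_nonneg fun J _ => X.G_nonneg _ (by omega) _)]
      exact add_le_add (X.sum_G_le s' M) (X.sum_G_le s M)
    -- bound on ∑ |ω|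
    set u : ℕ → ℝ := fun k => I (k + 1) with hu
    set S : ℝ := ∑ k ∈ Finset.range (M + 1), ((k : ℝ) + 1) * u k with hSdef
    have hS : S ≤ ε' * (M + 1) := by
      have := hM₀ (M + 1) (by omega)
      simpa [hSdef] using this
    have homsum : ∑ J ∈ Finset.range M, |∫ τ in s..s', X.We (J + 1) τ|
        ≤ 2 * (C₁ + C₂) * S := by
      have h11 : ∀ J ∈ Finset.range M, |∫ τ in s..s', X.We (J + 1) τ|
          ≤ 2 * C₁ * (((J : ℝ) + 1) * u J) + 2 * C₂ * (((J : ℝ) + 1 + 1) * u (J + 1)) := by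
        intro J _
        have h13 := homega (J + 1) (by omega)
        have hu1 : I (J + 1) = u J := rfl
        have hu2 : I (J + 2) = u (J + 1) := rfl
        rw [hu1, hu2] at h13
        have hn1 : 0 ≤ u J := hInn (J + 1) (by omega)
        have hn2 : 0 ≤ u (J + 1) := hInn (J + 2) (by omega)
        have hp1 : 0 ≤ C₁ * u J * (J : ℝ) :=
          mul_nonneg (mul_nonneg hC₁0 hn1) (Nat.cast_nonneg J)
        have hp2 : 0 ≤ C₂ * u (J + 1) * (J : ℝ) :=
          mul_nonneg (mul_nonneg hC₂0 hn2) (Nat.cast_nonneg J)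
        have hp3 : 0 ≤ C₂ * u (J + 1) := mul_nonneg hC₂0 hn2
        push_cast at h13 ⊢
        nlinarith [hp1, hp2, hp3]
      refine le_trans (Finset.sum_le_sum h11) ?_
      rw [Finset.sum_add_distrib]
      have h14 : ∑ J ∈ Finset.range M, 2 * C₁ * (((J : ℝ) + 1) * u J) ≤ 2 * C₁ * S := by
        rw [← Finset.mul_sum]
        refine mul_le_mul_of_nonneg_left ?_ (by linarith)
        refine Finset.sum_le_sum_of_subset_of_nonneg ?_ ?_
        · exact Finset.range_subset_range.2 (by omega)
        · intro k _ _
          exact mul_nonneg (by positivity) (hInn (k + 1) (by omega))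
      have h15 : ∑ J ∈ Finset.range M, 2 * C₂ * (((J : ℝ) + 1 + 1) * u (J + 1)) ≤ 2 * C₂ * S := by
        rw [← Finset.mul_sum]
        refine mul_le_mul_of_nonneg_left ?_ (by linarith)
        have h17 := Finset.sum_range_succ' (fun k => ((k : ℝ) + 1) * u k) M
        have h16 : ∑ J ∈ Finset.range M, (((J : ℝ) + 1 + 1) * u (J + 1))
            = ∑ J ∈ Finset.range M, (((J + 1 : ℕ) : ℝ) + 1) * u (J + 1) :=
          Finset.sum_congr rfl fun J _ => by push_cast; ring
        have h18 : 0 ≤ (((0 : ℕ) : ℝ) + 1) * u 0 :=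
          mul_nonneg (by norm_num) (hInn 1 (by omega))
        rw [hSdef, h17, h16]
        linarith
      linarith
    -- put it together
    have hMpos : (0 : ℝ) < M := by exact_mod_cast hM1
    have habs1 : (M : ℝ) * |X.ell s s'| ≤ 2 * (C₁ + C₂) * S + K := by
      have h19 : |(M : ℝ) * X.ell s s'| ≤ 2 * (C₁ + C₂) * S + K := by
        rw [hid]
        refine le_trans (abs_sub _ _) ?_
        refine add_le_add (le_trans (Finset.abs_sum_le_sum_abs _ _) homsum) hG1
      rw [abs_mul, abs_of_nonneg (le_of_lt hMpos)] at h19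
      exact h19
    have hden : (0 : ℝ) < 8 * (C₁ + C₂) + 8 := by positivity
    have he1 : ε' * (8 * (C₁ + C₂) + 8) = ε := by
      rw [hε']
      field_simp
    have hfrac : 2 * (C₁ + C₂) * (2 * ε') ≤ ε / 2 := by nlinarith [hε'0.le, hC₁0, hC₂0]
    have hSM : 2 * (C₁ + C₂) * S ≤ (ε / 2) * M := by
      have h20 : S ≤ 2 * ε' * M := by
        have : (M : ℝ) + 1 ≤ 2 * M := by
          have : (1 : ℝ) ≤ (M : ℝ) := by exact_mod_cast hM1
          linarith
        nlinarith [hε'0.le, hS]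
      have h21 : 2 * (C₁ + C₂) * S ≤ 2 * (C₁ + C₂) * (2 * ε' * M) := by
        refine mul_le_mul_of_nonneg_left h20 (by linarith)
      refine le_trans h21 ?_
      have := mul_le_mul_of_nonneg_right hfrac (le_of_lt hMpos)
      nlinarith [this]
    have hKM : K ≤ (ε / 2) * M := by
      have h22 : 2 * K ≤ ε * M := by
        have := (div_le_iff₀ hε).mp hMK
        linarith
      linarith
    have hfinal : (M : ℝ) * |X.ell s s'| ≤ ε * M := by
      calc (M : ℝ) * |X.ell s s'| ≤ 2 * (C₁ + C₂) * S + K := habs1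
        _ ≤ (ε / 2) * M + (ε / 2) * M := add_le_add hSM hKM
        _ = ε * M := by ring
    have := le_of_mul_le_mul_left (by linarith [hfinal] : (M : ℝ) * |X.ell s s'| ≤ (M : ℝ) * ε) hMpos
    linarith
  by_contra hne
  have habs : 0 < |X.ell s s'| := abs_pos.2 hne
  have := key (|X.ell s s'| / 2) (by linarith)
  linarith

-- === part5 ===


lemma G2_lsc : LowerSemicontinuous (X.G 2) := by
  intro x y hy
  obtain ⟨n, hn⟩ : ∃ n, y < ∑ i ∈ Finset.range n, X.ce (2 + i) x :=
    ((X.partial_tendsto 2 (by omega) x).eventually (eventually_gt_nhds hy)).exists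
  have hc : Continuous fun z => ∑ i ∈ Finset.range n, X.ce (2 + i) z :=
    continuous_finset_sum _ fun i _ => X.cont_ce _ (by omega)
  have hev : ∀ᶠ z in 𝓝 x, y < ∑ i ∈ Finset.range n, X.ce (2 + i) z :=
    (hc.tendsto x).eventually (eventually_gt_nhds hn)
  exact hev.mono fun z hz => lt_of_lt_of_le hz (X.partial_le_G 2 (by omega) z n)

lemma G2_meas : Measurable (X.G 2) := by
  refine measurable_of_tendsto_metrizable
    (f := fun n x => ∑ i ∈ Finset.range n, X.ce (2 + i) x)
    (fun n => (continuous_finset_sum _ fun i _ => X.cont_ce _ (by omega)).measurable) ?_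
  rw [tendsto_pi_nhds]
  exact fun x => X.partial_tendsto 2 (by omega) x

/-- set of points near which `G 2` is not integrable. -/
def Fbad : Set ℝ := {x | ∀ ε > 0, ¬ IntegrableOn (X.G 2) (Ioo (x - ε) (x + ε)) volume}

lemma isClosed_Fbad : IsClosed X.Fbad := by
  rw [← isOpen_compl_iff]
  refine Metric.isOpen_iff.2 fun x hx => ?_
  simp only [Fbad, mem_compl_iff, mem_setOf_eq, not_forall] at hx
  obtain ⟨ε, hε, hInt⟩ := hx
  rw [not_not] at hInt
  refine ⟨ε / 2, by linarith, fun y hy => ?_⟩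
  simp only [Metric.mem_ball, Real.dist_eq] at hy
  have hsub : Ioo (y - ε / 2) (y + ε / 2) ⊆ Ioo (x - ε) (x + ε) := by
    intro z hz
    rw [abs_sub_lt_iff] at hy
    constructor <;> [skip; skip] <;> cases hz with
    | intro h1 h2 => first | linarith | linarith
  intro hbad
  exact hbad (ε / 2) (by linarith) (hInt.mono_set hsub)

lemma Fbad_sub : X.Fbad ⊆ Ici 0 := by
  intro x hx
  by_contra hx0
  have hxneg : x < 0 := by simpa using hx0
  have hconst : EqOn (X.G 2) (fun _ => X.G 2 0) (Ioo (x - 1) 0) := by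
    intro τ hτ
    simp only
    refine tsum_congr fun i => ?_
    simp only [ce]
    rw [max_eq_right (le_of_lt hτ.2), max_self]
  have hInt : IntegrableOn (X.G 2) (Ioo (x - 1) 0) volume := by
    refine Integrable.congr (f := fun _ : ℝ => X.G 2 0) (g := X.G 2) ?_ ?_
    · exact (integrableOn_const_iff (C := X.G 2 0)).2 (Or.inr measure_Ioo_lt_top)
    · exact (ae_restrict_iff' measurableSet_Ioo).2 (Eventually.of_forall fun τ hτ =>
        (hconst hτ).symm)
  have hε : (0:ℝ) < min (-x) 1 := by
    simp only [lt_min_iff]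
    constructor <;> linarith [hxneg]
  refine hx (min (-x) 1) hε ?_
  refine hInt.mono_set fun z hz => ?_
  obtain ⟨h1, h2⟩ := hz
  constructor
  · have := min_le_right (-x) 1
    linarith
  · have := min_le_left (-x) 1
    linarith

/-- local integrability on a compact interval implies integrability. -/
lemma locInt {f : ℝ → ℝ} {A B : ℝ}
    (h : ∀ y ∈ Icc A B, ∃ ε > 0, IntegrableOn f (Ioo (y - ε) (y + ε)) volume) :
    IntegrableOn f (Icc A B) volume := by
  choose! eps heps hint using h
  have hcov : Icc A B ⊆ ⋃ y ∈ Icc A B, Ioo (y - eps y) (y + eps y) := fun y hy =>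
    mem_biUnion hy ⟨by linarith [heps y hy], by linarith [heps y hy]⟩
  obtain ⟨t, hsub, hfin, hcov'⟩ := (isCompact_Icc (a := A) (b := B)).elim_finite_subcover_image
    (fun y _ => isOpen_Ioo) hcov
  have hIntU : IntegrableOn f (⋃ y ∈ t, Ioo (y - eps y) (y + eps y)) volume := by
    refine (integrableOn_finite_biUnion hfin).2 fun y hy => hint y (hsub hy)
  exact hIntU.mono_set hcov'

-- === part6 ===


lemma Fbad_empty : X.Fbad = ∅ := by
  by_contra hne
  obtain ⟨x₀, hx₀⟩ := Set.nonempty_iff_ne_empty.2 hne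
  have hFc : IsClosed X.Fbad := X.isClosed_Fbad
  haveI : CompleteSpace X.Fbad := hFc.completeSpace_coe
  haveI : Nonempty X.Fbad := ⟨⟨x₀, hx₀⟩⟩
  have hclosed : ∀ m : ℕ, IsClosed {z : X.Fbad | X.G 2 (z : ℝ) ≤ m} := by
    intro m
    have h1 : IsClosed {x : ℝ | X.G 2 x ≤ m} := by
      have h2 : {x : ℝ | X.G 2 x ≤ m} = (fun x => X.G 2 x) ⁻¹' (Iic (m : ℝ)) := rfl
      rw [h2]
      rw [← isOpen_compl_iff]
      have h3 : ((fun x => X.G 2 x) ⁻¹' Iic (m : ℝ))ᶜ = {x : ℝ | (m : ℝ) < X.G 2 x} := by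
        ext x
        simp [not_le]
      rw [h3]
      exact X.G2_lsc.isOpen_preimage (m : ℝ)
    exact h1.preimage continuous_subtype_val
  have hcov : (⋃ m : ℕ, {z : X.Fbad | X.G 2 (z : ℝ) ≤ m}) = univ := by
    ext z
    simp only [mem_iUnion, mem_setOf_eq, mem_univ, iff_true]
    exact exists_nat_ge (X.G 2 z)
  obtain ⟨m₀, hm₀⟩ := nonempty_interior_of_iUnion_of_closed hclosed hcov
  obtain ⟨z₀, hz₀⟩ := hm₀
  rw [mem_interior_iff_mem_nhds, Metric.mem_nhds_iff] at hz₀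
  obtain ⟨ε₁, hε₁, hball⟩ := hz₀
  set x₁ : ℝ := (z₀ : ℝ) with hx₁def
  have hx₁F : x₁ ∈ X.Fbad := z₀.2
  have hx₁0 : 0 ≤ x₁ := X.Fbad_sub hx₁F
  have hK : ∀ x (hx : x ∈ X.Fbad), |x - x₁| < ε₁ → X.G 2 x ≤ m₀ := by
    intro x hxF hd
    have hmem : (⟨x, hxF⟩ : X.Fbad) ∈ Metric.ball z₀ ε₁ := by
      rw [Metric.mem_ball, Subtype.dist_eq, Real.dist_eq]
      exact hd
    exact hball hmem
  -- the continuous primitive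
  set h0 : ℝ → ℝ := fun x => X.G 2 0 + ∫ τ in (0:ℝ)..x, X.We 1 τ with hh0
  have hh0deriv : ∀ x : ℝ, HasDerivAt h0 (X.We 1 x) x := by
    intro x
    refine HasDerivAt.const_add _ ?_
    exact intervalIntegral.integral_hasDerivAt_right
      ((X.cont_We 1 le_rfl).intervalIntegrable _ _)
      ((X.cont_We 1 le_rfl).stronglyMeasurableAtFilter _ _)
      (X.cont_We 1 le_rfl).continuousAt
  have hh0cont : Continuous h0 :=
    continuous_iff_continuousAt.2 fun x => (hh0deriv x).continuousAt
  obtain ⟨Mh0, hMh0⟩ := (isCompact_Icc (a := x₁ - ε₁) (b := x₁ + ε₁)).exists_bound_of_continuousOn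
    hh0cont.continuousOn
  set Mh : ℝ := max Mh0 0 with hMhdef
  have hMh : ∀ y ∈ Icc (x₁ - ε₁) (x₁ + ε₁), |h0 y| ≤ Mh := fun y hy =>
    le_trans (hMh0 y hy) (le_max_left _ _)
  have hMhnn : 0 ≤ Mh := le_max_right _ _
  set L : ℝ → ℝ := fun x => X.G 2 x - h0 x with hL
  have hWint : ∀ s s' : ℝ, IntervalIntegrable (X.We 1) volume s s' := fun s s' =>
    (X.cont_We 1 le_rfl).intervalIntegrable _ _
  have hLdiff : ∀ s s' : ℝ, 0 ≤ s → s ≤ s' →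
      IntegrableOn (X.G 2) (Ioo s s') volume → L s' = L s := by
    intro s s' hs hss hInt
    have h1 := X.ell_eq_zero hs hss hInt
    rw [ell] at h1
    have h2 : ∫ τ in (0:ℝ)..s', X.We 1 τ
        = (∫ τ in (0:ℝ)..s, X.We 1 τ) + ∫ τ in s..s', X.We 1 τ :=
      (intervalIntegral.integral_add_adjacent_intervals (hWint 0 s) (hWint s s')).symm
    have h3 : h0 s' - h0 s = ∫ τ in s..s', X.We 1 τ := by
      simp only [hh0]
      rw [h2]
      ring
    show X.G 2 s' - h0 s' = X.G 2 s - h0 s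
    linarith [h1, h3]
  have hnotbad : ∀ y : ℝ, y ∉ X.Fbad →
      ∃ ε > 0, IntegrableOn (X.G 2) (Ioo (y - ε) (y + ε)) volume := by
    intro y hy
    simp only [Fbad, mem_setOf_eq, not_forall] at hy
    obtain ⟨ε, hε, hI⟩ := hy
    rw [not_not] at hI
    exact ⟨ε, hε, hI⟩
  have hconst : ∀ s s' : ℝ, 0 ≤ s → s ≤ s' → (∀ y, s ≤ y → y ≤ s' → y ∉ X.Fbad) →
      L s' = L s := by
    intro s s' hs hss hfree
    refine hLdiff s s' hs hss ?_
    refine IntegrableOn.mono_set ?_ Ioo_subset_Icc_self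
    exact locInt fun y hy => hnotbad y (hfree y hy.1 hy.2)
  -- gap extension
  have hgap : ∀ p q : ℝ, 0 ≤ p → p < q → (∀ y, p < y → y < q → y ∉ X.Fbad) →
      L q = L p := by
    intro p q hp hpq hfree
    set w : ℝ := (p + q) / 2 with hw
    have hw1 : p < w := by rw [hw]; linarith
    have hw2 : w < q := by rw [hw]; linarith
    have hLw : ∀ y, p < y → y < q → L y = L w := by
      intro y hy1 hy2
      rcases le_total y w with h | h
      · exact (hconst y w (by linarith) h fun z hz1 hz2 =>
          hfree z (by linarith) (by linarith)).symm
      · exact hconst w y (by linarith) h fun z hz1 hz2 =>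
          hfree z (by linarith) (by linarith)
    obtain ⟨Mg0, hMg0⟩ := (isCompact_Icc (a := p) (b := q)).exists_bound_of_continuousOn
      hh0cont.continuousOn
    have hIntpq : IntegrableOn (X.G 2) (Ioo p q) volume := by
      refine Integrable.mono' (g := fun _ => |L w| + Mg0)
        ((integrableOn_const_iff).2 (Or.inr measure_Ioo_lt_top))
        (X.G2_meas.aestronglyMeasurable.restrict) ?_
      refine (ae_restrict_iff' measurableSet_Ioo).2 (Eventually.of_forall fun y hy => ?_)
      have h3 : X.G 2 y = L y + h0 y := by simp [hL]
      have h4 : L y = L w := hLw y hy.1 hy.2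
      have h5 : |h0 y| ≤ Mg0 := hMg0 y ⟨le_of_lt hy.1, le_of_lt hy.2⟩
      rw [Real.norm_eq_abs, h3, h4]
      refine le_trans (abs_add_le _ _) ?_
      show |L w| + |h0 y| ≤ |L w| + Mg0
      linarith
    exact hLdiff p q hp (le_of_lt hpq) hIntpq
  -- the uniform bound on (x₁ - ε₁, x₁ + ε₁)
  have hbig : ∀ z ∈ Ioo (x₁ - ε₁) (x₁ + ε₁), X.G 2 z ≤ X.G 2 0 + (m₀ : ℝ) + 2 * Mh := by
    intro z hz
    obtain ⟨hz1, hz2⟩ := hz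
    have hG20 : 0 ≤ X.G 2 0 := X.G_nonneg 2 (by omega) 0
    have hm₀0 : (0:ℝ) ≤ m₀ := Nat.cast_nonneg m₀
    rcases lt_or_ge z 0 with hz0 | hz0
    · have hzz : X.G 2 z = X.G 2 0 := by
        refine tsum_congr fun i => ?_
        simp only [ce]
        rw [max_eq_right (le_of_lt hz0), max_self]
      rw [hzz]
      linarith
    by_cases hzF : z ∈ X.Fbad
    · have := hK z hzF (by rw [abs_sub_lt_iff]; constructor <;> linarith)
      linarith
    have hzIcc : z ∈ Icc (x₁ - ε₁) (x₁ + ε₁) := ⟨le_of_lt hz1, le_of_lt hz2⟩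
    by_cases hA : ∃ f, f ∈ X.Fbad ∧ z < f ∧ f < x₁ + ε₁
    · obtain ⟨f, hfF, hfz, hfv⟩ := hA
      set Q : Set ℝ := X.Fbad ∩ Icc z f with hQ
      have hQne : Q.Nonempty := ⟨f, hfF, ⟨le_of_lt hfz, le_rfl⟩⟩
      have hQc : IsClosed Q := hFc.inter isClosed_Icc
      have hQbdd : BddBelow Q := ⟨z, fun y hy => hy.2.1⟩
      set q := sInf Q with hq
      have hqQ : q ∈ Q := hQc.csInf_mem hQne hQbdd
      have hqz : z < q := by
        rcases lt_or_eq_of_le hqQ.2.1 with h | h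
        · exact h
        · exact absurd (h ▸ hqQ.1) hzF
      have hfree : ∀ y, z < y → y < q → y ∉ X.Fbad := by
        intro y h1 h2 hyF
        have hyQ : y ∈ Q := ⟨hyF, le_of_lt h1, le_trans (le_of_lt h2) hqQ.2.2⟩
        exact absurd (csInf_le hQbdd hyQ) (by linarith)
      have hLq := hgap z q hz0 hqz hfree
      have hqball : |q - x₁| < ε₁ := by
        have hq1 : z ≤ q := hqQ.2.1
        have hq2 : q ≤ f := hqQ.2.2
        rw [abs_sub_lt_iff]
        constructor <;> linarith
      have hGq : X.G 2 q ≤ m₀ := hK q hqQ.1 hqball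
      have hqIcc : q ∈ Icc (x₁ - ε₁) (x₁ + ε₁) := by
        rw [abs_sub_lt_iff] at hqball
        constructor <;> linarith [hqball.1, hqball.2]
      have h3 : X.G 2 z = X.G 2 q - h0 q + h0 z := by
        have e1 : L q = X.G 2 q - h0 q := rfl
        have e2 : L z = X.G 2 z - h0 z := rfl
        rw [e1, e2] at hLq
        linarith
      have h4 := abs_le.1 (hMh q hqIcc)
      have h5 := abs_le.1 (hMh z hzIcc)
      rw [h3]
      linarith [h4.1, h4.2, h5.1, h5.2]
    · push_neg at hA
      have hx₁z : x₁ < z := by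
        rcases lt_trichotomy x₁ z with h | h | h
        · exact h
        · exact absurd (h ▸ hx₁F) hzF
        · have := hA x₁ hx₁F h
          linarith
      set P : Set ℝ := X.Fbad ∩ Icc x₁ z with hP
      have hPne : P.Nonempty := ⟨x₁, hx₁F, le_rfl, le_of_lt hx₁z⟩
      have hPc : IsClosed P := hFc.inter isClosed_Icc
      have hPbdd : BddAbove P := ⟨z, fun y hy => hy.2.2⟩
      set p := sSup P with hp
      have hpP : p ∈ P := hPc.csSup_mem hPne hPbdd
      have hpz : p < z := by
        rcases lt_or_eq_of_le hpP.2.2 with h | h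
        · exact h
        · exact absurd (h ▸ hpP.1) hzF
      have hp0 : 0 ≤ p := X.Fbad_sub hpP.1
      have hfree : ∀ y, p < y → y < z → y ∉ X.Fbad := by
        intro y h1 h2 hyF
        have hyP : y ∈ P := ⟨hyF, le_trans hpP.2.1 (le_of_lt h1), le_of_lt h2⟩
        exact absurd (le_csSup hPbdd hyP) (by linarith)
      have hLp := hgap p z hp0 hpz hfree
      have hpball : |p - x₁| < ε₁ := by
        have hp1 : x₁ ≤ p := hpP.2.1
        have hp2 : p ≤ z := hpP.2.2
        rw [abs_sub_lt_iff]
        constructor <;> linarith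
      have hGp : X.G 2 p ≤ m₀ := hK p hpP.1 hpball
      have hpIcc : p ∈ Icc (x₁ - ε₁) (x₁ + ε₁) := by
        rw [abs_sub_lt_iff] at hpball
        constructor <;> linarith [hpball.1, hpball.2]
      have h3 : X.G 2 z = X.G 2 p - h0 p + h0 z := by
        have e1 : L p = X.G 2 p - h0 p := rfl
        have e2 : L z = X.G 2 z - h0 z := rfl
        rw [e1, e2] at hLp
        linarith
      have h4 := abs_le.1 (hMh p hpIcc)
      have h5 := abs_le.1 (hMh z hzIcc)
      rw [h3]
      linarith [h4.1, h4.2, h5.1, h5.2]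
  -- contradiction
  have hIntBig : IntegrableOn (X.G 2) (Ioo (x₁ - ε₁) (x₁ + ε₁)) volume := by
    refine Integrable.mono' (g := fun _ => X.G 2 0 + (m₀ : ℝ) + 2 * Mh)
      ((integrableOn_const_iff).2 (Or.inr measure_Ioo_lt_top))
      (X.G2_meas.aestronglyMeasurable.restrict) ?_
    refine (ae_restrict_iff' measurableSet_Ioo).2 (Eventually.of_forall fun y hy => ?_)
    rw [Real.norm_eq_abs, abs_of_nonneg (X.G_nonneg 2 (by omega) y)]
    exact hbig y hy
  exact hx₁F ε₁ hε₁ hIntBig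

/-- the global identity. -/
lemma globalG (J : ℕ) {x : ℝ} (hx : 0 ≤ x) :
    X.G (J + 2) x = X.G (J + 2) 0 + ∫ τ in (0:ℝ)..x, X.We (J + 1) τ := by
  have hInt : IntegrableOn (X.G 2) (Ioo 0 x) volume := by
    refine IntegrableOn.mono_set ?_ Ioo_subset_Icc_self
    refine locInt fun y hy => ?_
    have hnb : y ∉ X.Fbad := by
      rw [X.Fbad_empty]
      exact notMem_empty y
    simp only [Fbad, mem_setOf_eq, not_forall] at hnb
    obtain ⟨ε, hε, hI⟩ := hnb
    rw [not_not] at hI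
    exact ⟨ε, hε, hI⟩
  have h1 := X.ell_eq_zero (le_refl 0) hx hInt
  have h2 := X.limit_all J (le_refl 0) hx
  rw [h1] at h2
  linarith [h2]

end Setup
end BDtail

/-- **Evolution equation for the tail density.**  If `c` is a solution of the
Becker–Döring equations with non-negative initial datum of finite density and
(H1), (H2) hold, then for each `j ≥ 2` the tail density
`G_j(t) = ∑_{i ≥ j} c_i(t)` is continuously differentiable on `[0,∞)` and
`(d/dt) G_j(t) = a_{j-1} c_1(t) (G_{j-1}(t) - G_j(t)) + b_j (G_{j+1}(t) - G_j(t))`. -/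
theorem tail_density_evolution
    (a b : ℕ → ℝ) (γ : ℝ) (c : ℕ → ℝ → ℝ)
    (hapos : ∀ i : ℕ, 1 ≤ i → 0 < a i)
    (hbpos : ∀ i : ℕ, 2 ≤ i → 0 < b i)
    (hH1 : BDH1 a γ)
    (hH2 : ∃ bbar : ℝ, 0 < bbar ∧ ∀ i : ℕ, 1 ≤ i → b i ≤ bbar * a i)
    (hsol : IsBDSolution a b c) :
    ∀ j : ℕ, 2 ≤ j →
      (∀ t : ℝ, 0 ≤ t →
        HasDerivWithinAt (tailDensity c j)
          (a (j - 1) * c 1 t * (tailDensity c (j - 1) t - tailDensity c j t)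
            + b j * (tailDensity c (j + 1) t - tailDensity c j t))
          (Set.Ici 0) t)
      ∧ ContinuousOn
          (fun t : ℝ =>
            a (j - 1) * c 1 t * (tailDensity c (j - 1) t - tailDensity c j t)
              + b j * (tailDensity c (j + 1) t - tailDensity c j t))
          (Set.Ici 0) := by
  classical
  obtain ⟨bbar, hbbar0, hbb⟩ := hH2
  obtain ⟨Cm, hCm0, hCmle⟩ : ∃ Cm : ℝ, 0 ≤ Cm ∧ ∀ i : ℕ, 1 ≤ i → a i ≤ Cm * i := by
    rcases hH1 with ⟨hγ0, hγ1, abar, habar, hle⟩ | ⟨hγ, C₁, C₂, hC₁, hC₁₂, hle⟩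
    · refine ⟨abar, le_of_lt habar, fun i hi => ?_⟩
      have h1 : ((i : ℝ)) ^ γ ≤ (i : ℝ) ^ (1 : ℝ) := by
        refine Real.rpow_le_rpow_of_exponent_le ?_ (le_of_lt hγ1)
        exact_mod_cast hi
      rw [Real.rpow_one] at h1
      exact le_trans (hle i hi) (mul_le_mul_of_nonneg_left h1 (le_of_lt habar))
    · exact ⟨C₂, le_trans (le_of_lt hC₁) hC₁₂, fun i hi => (hle i hi).2⟩
  set X : BDtail.Setup :=
    { a := a, b := b, c := c, Cm := Cm, bb := bbar,
      hCm0 := hCm0, hbb0 := le_of_lt hbbar0, ha_le := hCmle,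
      ha0 := fun i hi => le_of_lt (hapos i hi),
      hb_le := hbb, hb0 := fun i hi => le_of_lt (hbpos i hi),
      cnonneg := hsol.nonneg, densSummable := hsol.densSummable, ode := hsol.ode,
      cont1 := fun t ht => (hsol.ode1 t ht).continuousWithinAt } with hXdef
  have hTD : ∀ (j : ℕ) (x : ℝ), 0 ≤ x → tailDensity c j x = X.G j x := by
    intro j x hx
    refine tsum_congr fun i => ?_
    exact (X.ce_eq hx).symm
  have hsplit : ∀ (m : ℕ), 1 ≤ m → ∀ x : ℝ, 0 ≤ x →
      tailDensity c m x = c m x + tailDensity c (m + 1) x := by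
    intro m hm x hx
    have hsum : Summable fun i => c (m + i) x :=
      (X.summable_ce m hm x).congr fun i => X.ce_eq hx
    have h0 := Summable.tsum_eq_zero_add hsum
    show (∑' i, c (m + i) x) = c m x + ∑' i, c ((m + 1) + i) x
    rw [h0]
    have e1 : c (m + 0) x = c m x := by norm_num
    have e2 : (∑' i, c (m + (i + 1)) x) = ∑' i, c ((m + 1) + i) x :=
      tsum_congr fun i => by rw [show m + (i + 1) = m + 1 + i from by omega]
    rw [e1, e2]
  intro j hj
  obtain ⟨J, rfl⟩ : ∃ J, j = J + 2 := ⟨j - 2, by omega⟩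
  have hWcont := X.cont_We (J + 1) (by omega)
  have hderivH : ∀ t : ℝ,
      HasDerivAt (fun x => X.G (J + 2) 0 + ∫ τ in (0:ℝ)..x, X.We (J + 1) τ)
        (X.We (J + 1) t) t := fun t =>
    HasDerivAt.const_add _ (intervalIntegral.integral_hasDerivAt_right
      (hWcont.intervalIntegrable _ _) (hWcont.stronglyMeasurableAtFilter _ _)
      hWcont.continuousAt)
  have hagree : ∀ x ∈ Set.Ici (0:ℝ), tailDensity c (J + 2) x
      = X.G (J + 2) 0 + ∫ τ in (0:ℝ)..x, X.We (J + 1) τ := by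
    intro x hx
    rw [hTD (J + 2) x hx]
    exact X.globalG J hx
  have hvalue : ∀ t : ℝ, 0 ≤ t → X.We (J + 1) t
      = a (J + 2 - 1) * c 1 t * (tailDensity c (J + 2 - 1) t - tailDensity c (J + 2) t)
        + b (J + 2) * (tailDensity c (J + 2 + 1) t - tailDensity c (J + 2) t) := by
    intro t ht
    have e0 : J + 2 - 1 = J + 1 := rfl
    rw [e0]
    have d1 : tailDensity c (J + 1) t - tailDensity c (J + 2) t = c (J + 1) t := by
      rw [hsplit (J + 1) (by omega) t ht]
      rw [show J + 1 + 1 = J + 2 from rfl]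
      ring
    have d2 : tailDensity c (J + 2 + 1) t - tailDensity c (J + 2) t = -(c (J + 2) t) := by
      rw [hsplit (J + 2) (by omega) t ht]
      ring
    rw [d1, d2, X.We_eq ht]
    show a (J + 1) * c 1 t * c (J + 1) t - b (J + 1 + 1) * c (J + 1 + 1) t
      = a (J + 1) * c 1 t * c (J + 1) t + b (J + 2) * -(c (J + 2) t)
    rw [show J + 1 + 1 = J + 2 from rfl]
    ring
  constructor
  · intro t ht
    have hd := (hderivH t).hasDerivWithinAt.congr hagree (hagree t ht)
    rw [hvalue t ht] at hd
    exact hd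
  · refine (hWcont.continuousOn).congr ?_
    intro t ht
    exact (hvalue t ht).symm
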